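/- There exists a set S ⊆ [ℕ]^∞ of cardinality 𝔡 such that the subspace S ∪ Fin of the Cantor space 𝒫(ℕ) is Menger but not Hurewicz. -/

import Mathlib

open Set Filter Cardinal

namespace OmissionOfIntervals

/-- The Cantor space `𝒫(ℕ)`, identified with `ℕ → Bool` via characteristic functions,
with the product topology. -/
abbrev CantorSp : Type := ℕ → Bool

/-- `Fin`: the points of the Cantor space coding finite subsets of `ℕ`. -/
def CFin : Set CantorSp := {x | {n | x n = true}.Finite}

/-- `[ℕ]^∞`: the points of the Cantor space coding infinite subsets of `ℕ`. -/
def CInf : Set CantorSp := {x | {n | x n = true}.Infinite}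

/-- Increasing enumeration of the subset of `ℕ` coded by `x`. -/
noncomputable def enum (x : CantorSp) : ℕ → ℕ := Nat.nth (fun n => x n = true)

/-- `f ≤* g`: `f n ≤ g n` for all but finitely many `n`. -/
def LeStar (f g : ℕ → ℕ) : Prop := ∀ᶠ n in atTop, f n ≤ g n

/-- `a ⊆* b`: the set coded by `a` is almost contained in the set coded by `b`. -/
def SubStar (a b : CantorSp) : Prop := {n | a n = true ∧ ¬ b n = true}.Finite

/-- A dominating family in the Baire space. -/
def Dominating (S : Set (ℕ → ℕ)) : Prop := ∀ f : ℕ → ℕ, ∃ s ∈ S, LeStar f s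

/-- An unbounded (with respect to `≤*`) family in the Baire space. -/
def UnboundedFam (S : Set (ℕ → ℕ)) : Prop := ¬ ∃ g : ℕ → ℕ, ∀ s ∈ S, LeStar s g

/-- The dominating number `𝔡`. -/
noncomputable def frd : Cardinal := sInf {c | ∃ S : Set (ℕ → ℕ), Dominating S ∧ #S = c}

/-- The bounding number `𝔟`. -/
noncomputable def frb : Cardinal := sInf {c | ∃ S : Set (ℕ → ℕ), UnboundedFam S ∧ #S = c}

/-- A centered family of infinite subsets of `ℕ`: every finite subfamily has infinite
intersection. -/
def Centered (S : Set CantorSp) : Prop :=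
  S ⊆ CInf ∧ ∀ F : Finset CantorSp, ↑F ⊆ S → {n | ∀ x ∈ F, x n = true}.Infinite

/-- `S` has a pseudointersection: an infinite set almost contained in every member of `S`. -/
def HasPseudointersection (S : Set CantorSp) : Prop := ∃ a ∈ CInf, ∀ s ∈ S, SubStar a s

/-- The pseudointersection number `𝔭`. -/
noncomputable def frp : Cardinal :=
  sInf {c | ∃ S : Set CantorSp, Centered S ∧ ¬ HasPseudointersection S ∧ #S = c}

/-- `S ⊆ [ℕ]^∞` is `κ`-unbounded: `|S| ≥ κ` and for every `b : ℕ → ℕ` only `< κ` many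
members of `S` satisfy `s(n) ≤ b(n)` for all `n` (via increasing enumerations). -/
def KappaUnbounded (κ : Cardinal) (S : Set CantorSp) : Prop :=
  κ ≤ #S ∧ ∀ b : ℕ → ℕ, #{s ∈ S | ∀ n, enum s n ≤ b n} < κ

/-- `X` is `κ`-concentrated on `CFin`: `|X| ≥ κ` and `|X ∖ U| < κ` for every open
`U ⊇ CFin`. -/
def KappaConcentrated (κ : Cardinal) (X : Set CantorSp) : Prop :=
  κ ≤ #X ∧ ∀ U : Set CantorSp, IsOpen U → CFin ⊆ U → #(X \ U : Set CantorSp) < κ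

/-- An open cover of the space `X`. -/
def IsOpenCover {X : Type*} [TopologicalSpace X] (𝒰 : Set (Set X)) : Prop :=
  (∀ U ∈ 𝒰, IsOpen U) ∧ ⋃₀ 𝒰 = Set.univ

/-- A point-cofinite (γ-) open cover of the space `X`: an infinite family of open sets such
that every point belongs to all but finitely many members. -/
def PointCofiniteCover {X : Type*} [TopologicalSpace X] (𝒰 : Set (Set X)) : Prop :=
  (∀ U ∈ 𝒰, IsOpen U) ∧ 𝒰.Infinite ∧ ∀ x : X, {U ∈ 𝒰 | x ∉ U}.Finite

/-- An ω-cover of the space `X`: no member contains all of `X`, and every finite subset of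
`X` is contained in some member. -/
def OmegaCover {X : Type*} [TopologicalSpace X] (𝒰 : Set (Set X)) : Prop :=
  (∀ U ∈ 𝒰, IsOpen U) ∧ (∀ U ∈ 𝒰, U ≠ Set.univ) ∧ ∀ F : Finset X, ∃ U ∈ 𝒰, ↑F ⊆ U

/-- An ω-cover of the subset `Y` by open subsets of the ambient space `X`. -/
def OmegaCoverOf {X : Type*} [TopologicalSpace X] (𝒰 : Set (Set X)) (Y : Set X) : Prop :=
  (∀ U ∈ 𝒰, IsOpen U) ∧ (∀ U ∈ 𝒰, ¬ Y ⊆ U) ∧ ∀ F : Finset X, ↑F ⊆ Y → ∃ U ∈ 𝒰, ↑F ⊆ U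

/-- The Menger property. -/
def Menger (X : Type*) [TopologicalSpace X] : Prop :=
  ∀ 𝒰 : ℕ → Set (Set X), (∀ n, IsOpenCover (𝒰 n)) →
    ∃ 𝓕 : ℕ → Set (Set X), (∀ n, 𝓕 n ⊆ 𝒰 n ∧ (𝓕 n).Finite) ∧ ⋃₀ (⋃ n, 𝓕 n) = Set.univ

/-- The Hurewicz property. -/
def Hurewicz (X : Type*) [TopologicalSpace X] : Prop :=
  ∀ 𝒰 : ℕ → Set (Set X), (∀ n, IsOpenCover (𝒰 n)) →
    (∀ n, ¬ ∃ 𝓕 ⊆ 𝒰 n, 𝓕.Finite ∧ ⋃₀ 𝓕 = Set.univ) →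
    ∃ 𝓕 : ℕ → Set (Set X), (∀ n, 𝓕 n ⊆ 𝒰 n ∧ (𝓕 n).Finite) ∧
      ∀ x : X, ∀ᶠ n in atTop, x ∈ ⋃₀ 𝓕 n

/-- The property `S1(Γ,Γ)`. -/
def S1GammaGamma (X : Type*) [TopologicalSpace X] : Prop :=
  ∀ 𝒰 : ℕ → Set (Set X), (∀ n, PointCofiniteCover (𝒰 n)) →
    ∃ U : ℕ → Set X, (∀ n, U n ∈ 𝒰 n) ∧ ∀ x : X, ∀ᶠ n in atTop, x ∈ U n

/-- The property `S1(Γ,O)`. -/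
def S1GammaO (X : Type*) [TopologicalSpace X] : Prop :=
  ∀ 𝒰 : ℕ → Set (Set X), (∀ n, PointCofiniteCover (𝒰 n)) →
    ∃ U : ℕ → Set X, (∀ n, U n ∈ 𝒰 n) ∧ (⋃ n, U n) = Set.univ

/-- The property `S1(Ω,Γ)`. -/
def S1OmegaGamma (X : Type*) [TopologicalSpace X] : Prop :=
  ∀ 𝒰 : ℕ → Set (Set X), (∀ n, OmegaCover (𝒰 n)) →
    ∃ U : ℕ → Set X, (∀ n, U n ∈ 𝒰 n) ∧ ∀ x : X, ∀ᶠ n in atTop, x ∈ U n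

/-- `X` is an ω-γ set: every open ω-cover has a subfamily that is a point-cofinite cover. -/
def OmegaGammaSet (X : Type*) [TopologicalSpace X] : Prop :=
  ∀ 𝒰 : Set (Set X), OmegaCover 𝒰 → ∃ 𝒱 ⊆ 𝒰, PointCofiniteCover 𝒱

/-- The property `U_k(Γ,Γ)`. -/
def UkGammaGamma (k : ℕ) (X : Type*) [TopologicalSpace X] : Prop :=
  ∀ 𝒰 : ℕ → Set (Set X), (∀ n, PointCofiniteCover (𝒰 n)) →
    (∀ n, ¬ ∃ 𝓕 : Finset (Set X), ↑𝓕 ⊆ 𝒰 n ∧ 𝓕.card ≤ k ∧ ⋃₀ (↑𝓕 : Set (Set X)) = Set.univ) →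
    ∃ 𝓕 : ℕ → Finset (Set X), (∀ n, ↑(𝓕 n) ⊆ 𝒰 n ∧ (𝓕 n).card ≤ k) ∧
      ∀ x : X, ∀ᶠ n in atTop, x ∈ ⋃₀ ((𝓕 n : Finset (Set X)) : Set (Set X))

/-- The property `U_id(Γ,Γ)`. -/
def UidGammaGamma (X : Type*) [TopologicalSpace X] : Prop :=
  ∀ 𝒰 : ℕ → Set (Set X), (∀ n, PointCofiniteCover (𝒰 n)) →
    (∀ n, ¬ ∃ 𝓕 : Finset (Set X), ↑𝓕 ⊆ 𝒰 n ∧ ⋃₀ (↑𝓕 : Set (Set X)) = Set.univ) →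
    ∃ 𝓕 : ℕ → Finset (Set X), (∀ n, ↑(𝓕 n) ⊆ 𝒰 n ∧ (𝓕 n).card ≤ n) ∧
      ∀ x : X, ∀ᶠ n in atTop, x ∈ ⋃₀ ((𝓕 n : Finset (Set X)) : Set (Set X))

/-- The set of terms of an ordinal-indexed sequence, below the ordinal `o`. -/
def rangeBelow (s : Ordinal → CantorSp) (o : Ordinal) : Set CantorSp := {x | ∃ α < o, x = s α}

/-- `s`, restricted to ordinals below `frb.ord`, is a `𝔟`-scale: an unbounded,
`≤*`-increasing `𝔟`-sequence of infinite subsets of `ℕ`. -/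
def IsBScale (s : Ordinal → CantorSp) : Prop :=
  (∀ α < frb.ord, s α ∈ CInf) ∧
  UnboundedFam {f | ∃ α < frb.ord, f = enum (s α)} ∧
  ∀ α β : Ordinal, α < β → β < frb.ord → LeStar (enum (s α)) (enum (s β))

/-- `t`, restricted to ordinals below `κ.ord`, is a `κ`-tower:
`⊆*`-decreasing sequence of infinite subsets of `ℕ`. -/
def IsTower (κ : Cardinal) (t : Ordinal → CantorSp) : Prop :=
  (∀ α < κ.ord, t α ∈ CInf) ∧
  ∀ α β : Ordinal, α < β → β < κ.ord → SubStar (t β) (t α)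

/-- An unbounded `κ`-tower. -/
def IsUnboundedTower (κ : Cardinal) (t : Ordinal → CantorSp) : Prop :=
  IsTower κ t ∧ UnboundedFam {f | ∃ α < κ.ord, f = enum (t α)}

/-- `a ⊑ b`: for all but finitely many `n`, the interval `[b(n), b(n+1)]` contains at least
two elements of the set coded by `a`. -/
def SqSubset (a b : CantorSp) : Prop :=
  ∀ᶠ n in atTop,
    2 ≤ ((Finset.Icc (enum b n) (enum b (n + 1))).filter (fun k => a k = true)).card

/-- `s`, restricted to ordinals below `frb.ord`, is a `𝔟(⊑)`-scale. -/
def IsBSqScale (s : Ordinal → CantorSp) : Prop :=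
  (∀ α < frb.ord, s α ∈ CInf) ∧
  UnboundedFam {f | ∃ α < frb.ord, f = enum (s α)} ∧
  ∀ α β : Ordinal, α < β → β < frb.ord → SqSubset (s α) (s β)


/-! ### Auxiliary development -/

section Aux

/-- The universal family is dominating. -/
lemma dominating_univ : Dominating (Set.univ : Set (ℕ → ℕ)) :=
  fun f => ⟨f, trivial, Eventually.of_forall fun _ => le_rfl⟩

lemma frdSet_nonempty : {c | ∃ S : Set (ℕ → ℕ), Dominating S ∧ #S = c}.Nonempty :=
  ⟨_, ⟨Set.univ, dominating_univ, rfl⟩⟩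

lemma exists_dominating_frd : ∃ S : Set (ℕ → ℕ), Dominating S ∧ #S = frd :=
  csInf_mem frdSet_nonempty

lemma frd_le_of_dominating {S : Set (ℕ → ℕ)} (h : Dominating S) : frd ≤ #S :=
  csInf_le (OrderBot.bddBelow _) ⟨S, h, rfl⟩

lemma not_dominating_of_lt_frd {S : Set (ℕ → ℕ)} (h : #S < frd) : ¬ Dominating S :=
  fun hd => absurd (frd_le_of_dominating hd) (not_le.mpr h)

/-- From a small family we get an escaping function. -/
lemma escape_of_lt_frd {S : Set (ℕ → ℕ)} (h : #S < frd) :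
    ∃ φ : ℕ → ℕ, ∀ s ∈ S, ∃ k, s k < φ k := by
  have hnd := not_dominating_of_lt_frd h
  rw [Dominating] at hnd
  push_neg at hnd
  obtain ⟨f, hf⟩ := hnd
  refine ⟨f, fun s hs => ?_⟩
  have := hf s hs
  rw [LeStar] at this
  have h2 : ∃ᶠ n in atTop, ¬ f n ≤ s n := by
    rwa [Filter.not_eventually] at this
  obtain ⟨k, hk⟩ := h2.exists
  exact ⟨k, not_le.mp hk⟩

lemma dominating_infinite {S : Set (ℕ → ℕ)} (h : Dominating S) : S.Infinite := by
  by_contra hni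
  rw [Set.not_infinite] at hni
  revert hni
  intro hfin
  classical
  obtain ⟨s, hs, hdom⟩ := h (fun n => (hfin.toFinset.sup fun g => g n) + 1)
  obtain ⟨n, hn⟩ := hdom.exists
  have h1 : s n ≤ hfin.toFinset.sup fun g => g n :=
    Finset.le_sup (f := fun g => g n) (hfin.mem_toFinset.mpr hs)
  have hn' : (hfin.toFinset.sup fun g => g n) + 1 ≤ s n := hn
  exact Nat.not_succ_le_self _ (hn'.trans h1)

lemma aleph0_le_frd : ℵ₀ ≤ frd := by
  obtain ⟨D, hD, hcard⟩ := exists_dominating_frd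
  rw [← hcard]
  exact Cardinal.aleph0_le_mk_iff.mpr (Set.infinite_coe_iff.mpr (dominating_infinite hD))

/-- Monotonization operator. -/
def mon (g : ℕ → ℕ) : ℕ → ℕ := fun n => n + 1 + (Finset.range (n + 1)).sup g

lemma mon_strictMono (g : ℕ → ℕ) : StrictMono (mon g) := by
  apply strictMono_nat_of_lt_succ
  intro n
  have : (Finset.range (n + 1)).sup g ≤ (Finset.range (n + 2)).sup g :=
    Finset.sup_mono (by intro x hx; simp only [Finset.mem_range] at hx ⊢; omega)
  simp only [mon]
  have h2 : (Finset.range (n + 1 + 1)).sup g = (Finset.range (n + 2)).sup g := by norm_num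
  omega

lemma le_mon (g : ℕ → ℕ) (n : ℕ) : g n ≤ mon g n := by
  have : g n ≤ (Finset.range (n + 1)).sup g :=
    Finset.le_sup (Finset.self_mem_range_succ n)
  simp only [mon]; omega

lemma lt_mon (g : ℕ → ℕ) (n : ℕ) : n < mon g n := by simp only [mon]; omega

lemma mon_mono (g : ℕ → ℕ) : Monotone (mon g) := (mon_strictMono g).monotone

/-- Characteristic function of the range of `u`. -/
def xfun (u : ℕ → ℕ) : CantorSp := fun n => decide (∃ j ≤ n, u j = n)

lemma xfun_eq_true_iff {u : ℕ → ℕ} (hu : StrictMono u) (n : ℕ) :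
    xfun u n = true ↔ n ∈ Set.range u := by
  simp only [xfun, decide_eq_true_eq]
  constructor
  · rintro ⟨j, -, rfl⟩; exact ⟨j, rfl⟩
  · rintro ⟨j, rfl⟩; exact ⟨j, hu.le_apply, rfl⟩

lemma xfun_support {u : ℕ → ℕ} (hu : StrictMono u) :
    {n | xfun u n = true} = Set.range u := by
  ext n; exact xfun_eq_true_iff hu n

lemma xfun_mem_CInf {u : ℕ → ℕ} (hu : StrictMono u) : xfun u ∈ CInf := by
  have : {n | xfun u n = true} = Set.range u := xfun_support hu
  simp only [CInf, Set.mem_setOf_eq, this]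
  exact Set.infinite_range_of_injective hu.injective

lemma count_xfun {u : ℕ → ℕ} (hu : StrictMono u) (n : ℕ) :
    Nat.count (fun i => xfun u i = true) (u n) = n := by
  classical
  rw [Nat.count_eq_card_filter_range]
  have hset : (Finset.range (u n)).filter (fun i => xfun u i = true)
      = (Finset.range n).image u := by
    ext i
    simp only [Finset.mem_filter, Finset.mem_range, Finset.mem_image]
    constructor
    · rintro ⟨hi, hx⟩
      obtain ⟨j, rfl⟩ := (xfun_eq_true_iff hu i).mp hx
      exact ⟨j, hu.lt_iff_lt.mp hi, rfl⟩
    · rintro ⟨j, hj, rfl⟩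
      exact ⟨hu.lt_iff_lt.mpr hj, (xfun_eq_true_iff hu _).mpr ⟨j, rfl⟩⟩
  rw [hset, Finset.card_image_of_injective _ hu.injective, Finset.card_range]

lemma enum_xfun {u : ℕ → ℕ} (hu : StrictMono u) : enum (xfun u) = u := by
  classical
  funext n
  have hmem : xfun u (u n) = true := (xfun_eq_true_iff hu _).mpr ⟨n, rfl⟩
  have := Nat.nth_count (p := fun i => xfun u i = true) hmem
  rwa [count_xfun hu] at this

lemma xfun_inj {u v : ℕ → ℕ} (hu : StrictMono u) (hv : StrictMono v)
    (h : xfun u = xfun v) : u = v := by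
  have h1 : enum (xfun u) = enum (xfun v) := by rw [h]
  rwa [enum_xfun hu, enum_xfun hv] at h1

end Aux


section Stage

/-- One step of the staircase construction: given a strictly monotone target `F` and a small
family `B` of monotone functions, produce a strictly monotone `u` (enumeration of a staircase
set) that escapes every member of `B`, is "thick" below `F` at infinitely many scales, and has
unbounded gaps. -/
lemma stageEx (F : ℕ → ℕ) (hF : StrictMono F) (hFid : ∀ n, n < F n)
    (B : Set (ℕ → ℕ)) (hmono : ∀ b ∈ B, Monotone b) (hB : #B < frd) :
    ∃ u : ℕ → ℕ, StrictMono u ∧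
      (∀ b ∈ B, ∃ k, b k < u k) ∧
      (∀ n, ∃ m', n < m' ∧ ∀ p ≤ F m', ∃ j, p ≤ u j ∧ u j < p + m') ∧
      (∀ n, ∃ p, ∀ j, ¬ (p ≤ u j ∧ u j < p + n)) := by
  classical
  set γ : (ℕ → ℕ) → ℕ → ℕ :=
    fun b k => Nat.rec (motive := fun _ => ℕ) (b 0 + 1) (fun _ g => b (F g + 2) + 1) k with hγdef
  have hγ0 : ∀ b, γ b 0 = b 0 + 1 := fun b => rfl
  have hγs : ∀ b k, γ b (k + 1) = b (F (γ b k) + 2) + 1 := fun b k => rfl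
  have hΓ : #(γ '' B) < frd := lt_of_le_of_lt Cardinal.mk_image_le hB
  obtain ⟨φ, hφ⟩ := escape_of_lt_frd hΓ
  set m : ℕ → ℕ := mon φ with hm
  have hmsm : StrictMono m := mon_strictMono φ
  have hm1 : ∀ k, 1 ≤ m k := fun k => Nat.lt_of_le_of_lt (Nat.zero_le k) (lt_mon φ k)
  have hKex : ∀ a : ℕ, ∃ k, a ≤ F (m k) :=
    fun a => ⟨a, le_of_lt (lt_trans (lt_mon φ a) (hFid (m a)))⟩
  set K : ℕ → ℕ := fun a => Nat.find (hKex a) with hK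
  have hKspec : ∀ a, a ≤ F (m (K a)) := fun a => Nat.find_spec (hKex a)
  have hKmin : ∀ a k, a ≤ F (m k) → K a ≤ k := fun a k h => Nat.find_le h
  have hKlb : ∀ a k, F (m k) < a → k < K a := by
    intro a k h
    by_contra hcon; push_neg at hcon
    have h1 : F (m (K a)) ≤ F (m k) := hF.monotone (hmsm.monotone hcon)
    have h2 := hKspec a
    omega
  set u : ℕ → ℕ :=
    fun j => Nat.rec (motive := fun _ => ℕ) (m 0 - 1) (fun _ prev => prev + m (K prev)) j
    with hudef
  have hu0 : u 0 = m 0 - 1 := rfl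
  have hus : ∀ j, u (j + 1) = u j + m (K (u j)) := fun j => rfl
  have hum : StrictMono u := by
    apply strictMono_nat_of_lt_succ
    intro j
    have h1 := hm1 (K (u j))
    have h2 := hus j
    omega
  have huj : ∀ j, j ≤ u j := fun j => hum.le_apply
  have hu0' : u 0 + 1 = m 0 := by have := hm1 0; rw [hu0]; omega
  -- (b) windows
  have hbprop : ∀ k p, p ≤ F (m k) → ∃ j, p ≤ u j ∧ u j < p + m k := by
    intro k p hp
    by_cases h0 : p ≤ u 0
    · refine ⟨0, h0, ?_⟩
      have h2 : m 0 ≤ m k := hmsm.monotone (Nat.zero_le k)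
      omega
    · push_neg at h0
      have hex : ∃ j, p ≤ u (j + 1) := ⟨p, le_trans (Nat.le_succ p) (huj (p + 1))⟩
      set j0 := Nat.find hex with hj0
      have hj1 : p ≤ u (j0 + 1) := Nat.find_spec hex
      have hj2 : u j0 < p := by
        rcases Nat.eq_zero_or_pos j0 with h | h
        · rw [h]; exact h0
        · obtain ⟨j', hj'⟩ := Nat.exists_eq_succ_of_ne_zero (Nat.pos_iff_ne_zero.mp h)
          have hmin := Nat.find_min hex (m := j') (by omega)
          push_neg at hmin
          rw [hj']
          exact hmin
      refine ⟨j0 + 1, hj1, ?_⟩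
      have hK1 : K (u j0) ≤ k := hKmin _ _ (le_trans (le_of_lt hj2) hp)
      have hK2 : m (K (u j0)) ≤ m k := hmsm.monotone hK1
      have h3 := hus j0
      omega
  -- (c) gaps
  have hcprop : ∀ n, ∃ p, ∀ j, ¬ (p ≤ u j ∧ u j < p + n) := by
    intro n
    set j0 := F (m n) + 1 with hj0
    have hji : F (m n) < u j0 := lt_of_lt_of_le (Nat.lt_succ_self _) (huj j0)
    refine ⟨u j0 + 1, fun j => ?_⟩
    rintro ⟨h1, h2⟩
    have hj : j0 < j := by
      by_contra hcon; push_neg at hcon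
      have := hum.monotone hcon
      omega
    have hjs : u (j0 + 1) ≤ u j := hum.monotone hj
    rw [hus j0] at hjs
    have hKn : n < K (u j0) := hKlb _ _ hji
    have hmn : K (u j0) < m (K (u j0)) := lt_mon φ _
    omega
  -- (a) escapes
  have haprop : ∀ b ∈ B, ∃ k, b k < u k := by
    intro b hb
    by_contra hcon; push_neg at hcon
    have hmle : ∀ k, m k ≤ γ b k := by
      intro k
      induction k with
      | zero =>
        have h1 := hcon 0
        have h2 := hγ0 b
        omega
      | succ k ih =>
        have hTex : ∃ j, F (m k) < u j :=
          ⟨F (m k) + 1, lt_of_lt_of_le (Nat.lt_succ_self _) (huj _)⟩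
        set T := Nat.find hTex with hT
        have hT1 : F (m k) < u T := Nat.find_spec hTex
        have hT2 : T ≤ F (m k) + 1 :=
          Nat.find_le (lt_of_lt_of_le (Nat.lt_succ_self _) (huj _))
        have hKT : k + 1 ≤ K (u T) := hKlb _ _ hT1
        have hstep : m (k + 1) ≤ u (T + 1) := by
          have h1 : m (k + 1) ≤ m (K (u T)) := hmsm.monotone hKT
          have h2 := hus T
          omega
        have hb1 : u (T + 1) ≤ b (T + 1) := hcon (T + 1)
        have hb2 : b (T + 1) ≤ b (F (m k) + 2) := hmono b hb (by omega)
        have hb3 : b (F (m k) + 2) ≤ b (F (γ b k) + 2) :=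
          hmono b hb (by have := hF.monotone ih; omega)
        have h4 := hγs b k
        omega
    obtain ⟨kk, hkk⟩ := hφ (γ b) ⟨b, hb, rfl⟩
    have h5 : φ kk ≤ m kk := by rw [hm]; exact le_mon φ kk
    have h6 := hmle kk
    omega
  refine ⟨u, hum, haprop, fun n => ⟨m (n + 1), ?_, hbprop (n + 1)⟩, hcprop⟩
  have h7 : n + 1 < m (n + 1) := by rw [hm]; exact lt_mon φ (n + 1)
  omega

end Stage


section Topo

lemma cfin_countable : CFin.Countable := by
  classical
  have hsub : CFin ⊆ (fun (F : Finset ℕ) => (fun n => decide (n ∈ F) : CantorSp)) '' Set.univ := by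
    intro x hx
    refine ⟨hx.toFinset, trivial, ?_⟩
    funext n
    by_cases h : x n = true
    · have : n ∈ hx.toFinset := hx.mem_toFinset.mpr h
      simp [this, h]
    · have hf : x n = false := by cases hxn : x n; rfl; exact absurd hxn h
      have : n ∉ hx.toFinset := fun hn => h (hx.mem_toFinset.mp hn)
      simp [this, hf]
  exact Set.Countable.mono hsub (Set.countable_univ.image _)

lemma zero_mem_CFin : (fun _ => false : CantorSp) ∈ CFin := by
  have : {n | (fun _ => false : CantorSp) n = true} = ∅ := by
    ext n; simp
  simp only [CFin, Set.mem_setOf_eq, this]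
  exact Set.finite_empty

lemma nbhd_cylinder {U : Set CantorSp} (hU : IsOpen U) {z : CantorSp} (hz : z ∈ U) :
    ∃ N, ∀ w : CantorSp, (∀ i < N, w i = z i) → w ∈ U := by
  obtain ⟨I, v, hIv, hsub⟩ := isOpen_pi_iff.mp hU z hz
  refine ⟨I.sup id + 1, fun w hw => hsub ?_⟩
  intro i hi
  have hiI : i ∈ I := hi
  have hle : i ≤ I.sup id := Finset.le_sup (f := id) hiI
  have hwz : w i = z i := hw i (by omega)
  rw [hwz]
  exact (hIv i hiI).2

/-- Core of the concentration argument: any open set containing all finite sets traps every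
set missing one of a fixed sequence of intervals; consequently every point outside it meets
every interval, so its enumeration is bounded by a fixed function. -/
lemma conc_core {U : Set CantorSp} (hU : IsOpen U) (hCF : CFin ⊆ U) :
    ∃ b : ℕ → ℕ, ∀ x : CantorSp, x ∉ U → ∀ k, enum x k ≤ b k := by
  classical
  have hN : ∀ G : Finset ℕ, ∃ N, ∀ w : CantorSp, (∀ i < N, w i = decide (i ∈ G)) → w ∈ U := by
    intro G
    apply nbhd_cylinder hU
    apply hCF
    have hsub : {n | (fun i => decide (i ∈ G) : CantorSp) n = true} ⊆ ↑G := by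
      intro n hn
      simpa using hn
    exact Set.Finite.subset G.finite_toSet hsub
  choose NF hNF using hN
  set c : ℕ → ℕ := fun k => Nat.rec (motive := fun _ => ℕ)
      0 (fun _ a => ((Finset.range a).powerset.sup NF) + a + 1) k with hcdef
  have hcs : ∀ k, c (k + 1) = ((Finset.range (c k)).powerset.sup NF) + c k + 1 := fun k => rfl
  have hcmono : StrictMono c := strictMono_nat_of_lt_succ (fun k => by rw [hcs]; omega)
  have hhit : ∀ x : CantorSp, x ∉ U → ∀ k, ∃ i, (c k ≤ i ∧ i < c (k + 1)) ∧ x i = true := by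
    intro x hx k
    by_contra hcon; push_neg at hcon
    set G : Finset ℕ := (Finset.range (c k)).filter (fun i => x i = true) with hG
    have hGsub : G ∈ (Finset.range (c k)).powerset :=
      Finset.mem_powerset.mpr (Finset.filter_subset _ _)
    have hNle : NF G ≤ c (k + 1) := by
      have := Finset.le_sup (f := NF) hGsub
      rw [hcs]; omega
    apply hx
    apply hNF G
    intro i hiN
    by_cases hik : i < c k
    · by_cases hxi : x i = true
      · have : i ∈ G := by
          rw [hG]; exact Finset.mem_filter.mpr ⟨Finset.mem_range.mpr hik, hxi⟩
        simp [this, hxi]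
      · have hxf : x i = false := by cases hxn : x i; rfl; exact absurd hxn hxi
        have : i ∉ G := by
          rw [hG]; intro hmem
          exact hxi (Finset.mem_filter.mp hmem).2
        simp [this, hxf]
    · push_neg at hik
      have hiblock : i < c (k + 1) := lt_of_lt_of_le hiN hNle
      have hxi : ¬ x i = true := hcon i ⟨hik, hiblock⟩
      have hxf : x i = false := by cases hxn : x i; rfl; exact absurd hxn hxi
      have hiG : i ∉ G := by
        rw [hG]; intro hmem
        have := Finset.mem_range.mp (Finset.mem_filter.mp hmem).1
        omega
      simp [hiG, hxf]
  refine ⟨fun k => c (k + 1), fun x hx k => ?_⟩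
  choose e he1 he2 using hhit x hx
  have hesm : StrictMono e := by
    intro a b hab
    exact lt_of_lt_of_le (he1 a).2 (le_trans (hcmono.monotone hab) (he1 b).1)
  have hcount : k < Nat.count (fun i => x i = true) (c (k + 1)) := by
    rw [Nat.count_eq_card_filter_range]
    have himage : (Finset.range (k + 1)).image e ⊆
        (Finset.range (c (k + 1))).filter (fun i => x i = true) := by
      intro i hi
      simp only [Finset.mem_image, Finset.mem_range] at hi
      obtain ⟨k', hk', rfl⟩ := hi
      refine Finset.mem_filter.mpr ⟨Finset.mem_range.mpr ?_, he2 k'⟩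
      exact lt_of_lt_of_le (he1 k').2 (hcmono.monotone (show k' + 1 ≤ k + 1 by omega))
    have hcard : ((Finset.range (k + 1)).image e).card = k + 1 := by
      rw [Finset.card_image_of_injective _ hesm.injective, Finset.card_range]
    have := Finset.card_le_card himage
    omega
  have := Nat.nth_lt_of_lt_count hcount
  show Nat.nth _ k ≤ c (k + 1)
  omega

end Topo


section MengerSide

lemma menger_of (S : Set CantorSp)
    (hsmall : ∀ b : ℕ → ℕ, #{x : CantorSp | x ∈ S ∧ ∀ k, enum x k ≤ b k} < frd) :
    Menger ↥(S ∪ CFin) := by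
  classical
  intro 𝒰 h𝒰
  have hV : ∀ n, ∃ V : ℕ → Set ↥(S ∪ CFin), (∀ m, V m ∈ 𝒰 n) ∧ (⋃ m, V m) = Set.univ := by
    intro n
    obtain ⟨T, hTc, hTsub, hTun⟩ :=
      TopologicalSpace.isOpen_sUnion_countable (𝒰 n) (h𝒰 n).1
    rw [(h𝒰 n).2] at hTun
    have hTne : T.Nonempty := by
      have hx : (⟨(fun _ => false), Or.inr zero_mem_CFin⟩ : ↥(S ∪ CFin)) ∈ ⋃₀ T := by
        rw [hTun]; trivial
      obtain ⟨t, ht, -⟩ := hx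
      exact ⟨t, ht⟩
    obtain ⟨V, hVeq⟩ := Set.Countable.exists_eq_range hTc hTne
    refine ⟨V, fun m => hTsub (hVeq ▸ Set.mem_range_self m), ?_⟩
    rw [← Set.sUnion_range, ← hVeq, hTun]
  choose V hVmem hVun using hV
  have hEc : {x : ↥(S ∪ CFin) | (x : CantorSp) ∈ CFin}.Countable :=
    Set.Countable.preimage cfin_countable Subtype.val_injective
  have hEne : {x : ↥(S ∪ CFin) | (x : CantorSp) ∈ CFin}.Nonempty :=
    ⟨⟨_, Or.inr zero_mem_CFin⟩, zero_mem_CFin⟩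
  obtain ⟨σ, hσ⟩ := Set.Countable.exists_eq_range hEc hEne
  have hmj : ∀ j : ℕ, ∃ mjj, σ j ∈ V (2 * j) mjj := by
    intro j
    have hj : σ j ∈ ⋃ m, V (2 * j) m := by rw [hVun (2 * j)]; trivial
    simpa using hj
  choose mj hmjspec using hmj
  set Uo : Set ↥(S ∪ CFin) := ⋃ j, V (2 * j) (mj j) with hUo
  have hUoopen : IsOpen Uo :=
    isOpen_iUnion (fun j => (h𝒰 (2 * j)).1 _ (hVmem (2 * j) (mj j)))
  obtain ⟨U', hU'open, hU'pre⟩ := isOpen_induced_iff.mp hUoopen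
  have hCFU' : CFin ⊆ U' := by
    intro z hz
    have hmem : (⟨z, Or.inr hz⟩ : ↥(S ∪ CFin)) ∈ {x : ↥(S ∪ CFin) | (x : CantorSp) ∈ CFin} := hz
    rw [hσ] at hmem
    obtain ⟨j, hj⟩ := hmem
    have hin : (⟨z, Or.inr hz⟩ : ↥(S ∪ CFin)) ∈ Uo := Set.mem_iUnion.mpr ⟨j, hj ▸ hmjspec j⟩
    rw [← hU'pre] at hin
    exact hin
  obtain ⟨bb, hbb⟩ := conc_core hU'open hCFU'
  set Y : Set ↥(S ∪ CFin) := {x | (x : CantorSp) ∉ U'} with hYdef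
  have hYsub : ∀ y : Y, (y : CantorSp) ∈ S ∧ ∀ k, enum (y : CantorSp) k ≤ bb k := by
    intro y
    have hyU : ((y : ↥(S ∪ CFin)) : CantorSp) ∉ U' := y.2
    have hyS : ((y : ↥(S ∪ CFin)) : CantorSp) ∈ S := by
      rcases (y : ↥(S ∪ CFin)).2 with h | h
      · exact h
      · exact absurd (hCFU' h) hyU
    exact ⟨hyS, hbb _ hyU⟩
  have hYcard : #Y < frd := by
    have hle : #Y ≤ #{x : CantorSp | x ∈ S ∧ ∀ k, enum x k ≤ bb k} := by
      apply Cardinal.mk_le_of_injective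
        (f := fun y : Y =>
          (⟨(y : CantorSp), hYsub y⟩ : {x : CantorSp | x ∈ S ∧ ∀ k, enum x k ≤ bb k}))
      intro a b hab
      have h1 : ((a : ↥(S ∪ CFin)) : CantorSp) = ((b : ↥(S ∪ CFin)) : CantorSp) := by
        have := congrArg Subtype.val hab
        simpa using this
      exact Subtype.ext (Subtype.ext h1)
    exact lt_of_le_of_lt hle (hsmall bb)
  have hfy : ∀ y : Y, ∀ j : ℕ, ∃ mm, (y : ↥(S ∪ CFin)) ∈ V (2 * j + 1) mm := by
    intro y j
    have hj : (y : ↥(S ∪ CFin)) ∈ ⋃ m, V (2 * j + 1) m := by rw [hVun (2 * j + 1)]; trivial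
    simpa using hj
  choose fy hfyspec using hfy
  have hfam : #(Set.range fy) < frd := lt_of_le_of_lt Cardinal.mk_range_le hYcard
  obtain ⟨φ, hφ⟩ := escape_of_lt_frd hfam
  refine ⟨fun n => if n % 2 = 0 then {V n (mj (n / 2))} else V n '' (Set.Iic (φ (n / 2))),
    fun n => ⟨?_, ?_⟩, ?_⟩
  · show (if n % 2 = 0 then {V n (mj (n / 2))} else V n '' (Set.Iic (φ (n / 2)))) ⊆ 𝒰 n
    by_cases hpar : n % 2 = 0
    · rw [if_pos hpar]
      rintro A hA
      rw [Set.mem_singleton_iff] at hA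
      rw [hA]
      exact hVmem n _
    · rw [if_neg hpar]
      rintro A ⟨mm, -, rfl⟩
      exact hVmem n mm
  · show (if n % 2 = 0 then {V n (mj (n / 2))} else V n '' (Set.Iic (φ (n / 2)))).Finite
    by_cases hpar : n % 2 = 0
    · rw [if_pos hpar]; exact Set.finite_singleton _
    · rw [if_neg hpar]; exact (Set.finite_Iic _).image _
  · rw [Set.eq_univ_iff_forall]
    intro x
    by_cases hxU : (x : CantorSp) ∈ U'
    · have hin : x ∈ Uo := by rw [← hU'pre]; exact hxU
      obtain ⟨j, hj⟩ := Set.mem_iUnion.mp hin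
      refine ⟨V (2 * j) (mj j), Set.mem_iUnion.mpr ⟨2 * j, ?_⟩, hj⟩
      have heven : (2 * j) % 2 = 0 := by omega
      have hdiv : (2 * j) / 2 = j := by omega
      simp only [heven, if_pos, hdiv]
      rfl
    · have hxY : x ∈ Y := hxU
      obtain ⟨k, hk⟩ := hφ (fy ⟨x, hxY⟩) (Set.mem_range_self _)
      refine ⟨V (2 * k + 1) (fy ⟨x, hxY⟩ k), Set.mem_iUnion.mpr ⟨2 * k + 1, ?_⟩,
        hfyspec ⟨x, hxY⟩ k⟩
      have hodd : ¬ (2 * k + 1) % 2 = 0 := by omega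
      have hdiv : (2 * k + 1) / 2 = k := by omega
      simp only [hodd, if_neg, hdiv, ite_false]
      exact ⟨fy ⟨x, hxY⟩ k, le_of_lt hk, rfl⟩

end MengerSide


section HurewiczSide

lemma bound_of_finite_subrange {α : Type*} (W : ℕ → Set α)
    (hmono : ∀ m m', m ≤ m' → W m ⊆ W m')
    (𝓕 : Set (Set α)) (hfin : 𝓕.Finite) (hsub : 𝓕 ⊆ Set.range W) :
    ∃ M, ∀ A ∈ 𝓕, A ⊆ W M := by
  classical
  have hg : ∀ A : 𝓕, ∃ m, W m = (A : Set α) := fun A => hsub A.2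
  choose g hgspec using hg
  haveI := hfin.fintype
  refine ⟨Finset.univ.sup g, ?_⟩
  intro A hA
  have h1 : W (g ⟨A, hA⟩) = A := hgspec ⟨A, hA⟩
  rw [← h1]
  exact hmono _ _ (Finset.le_sup (Finset.mem_univ _))

lemma not_hurewicz_of (S : Set CantorSp)
    (hgapS : ∀ x ∈ S, ∀ n : ℕ, ∃ p : ℕ, ∀ i < n, x (p + i) = false)
    (hesc : ∀ h : ℕ → ℕ, ∃ x ∈ S, ∀ N : ℕ, ∃ n ≥ N,
      ∀ p ≤ h (n + 1), ∃ i < n + 1, x (p + i) = true) :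
    ¬ Hurewicz ↥(S ∪ CFin) := by
  classical
  intro hH
  set W : ℕ → ℕ → Set ↥(S ∪ CFin) :=
    fun n m => {x | ∃ p ≤ m, ∀ i < n + 1, (x : CantorSp) (p + i) = false} with hW
  have hWopen : ∀ n m, IsOpen (W n m) := by
    intro n m
    have h1 : IsOpen {z : CantorSp | ∃ p ≤ m, ∀ i < n + 1, z (p + i) = false} := by
      have heq : {z : CantorSp | ∃ p ≤ m, ∀ i < n + 1, z (p + i) = false}
          = ⋃ p ∈ Set.Iic m, ⋂ i ∈ Set.Iio (n + 1), {z : CantorSp | z (p + i) = false} := by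
        ext z
        simp only [Set.mem_setOf_eq, Set.mem_iUnion, Set.mem_iInter, Set.mem_Iic, Set.mem_Iio,
          exists_prop]
      rw [heq]
      apply isOpen_biUnion
      intro p _
      apply Set.Finite.isOpen_biInter (Set.finite_Iio _)
      intro i _
      have hc : Continuous (fun z : CantorSp => z (p + i)) := continuous_apply (p + i)
      have : {z : CantorSp | z (p + i) = false}
          = (fun z : CantorSp => z (p + i)) ⁻¹' ({false} : Set Bool) := by
        ext z; simp
      rw [this]
      exact hc.isOpen_preimage _ (isOpen_discrete _)
    have h2 : W n m
        = Subtype.val ⁻¹' {z : CantorSp | ∃ p ≤ m, ∀ i < n + 1, z (p + i) = false} := rfl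
    rw [h2]
    exact h1.preimage continuous_subtype_val
  have hWmono : ∀ n m m', m ≤ m' → W n m ⊆ W n m' := by
    rintro n m m' hmm x ⟨p, hp, hall⟩
    exact ⟨p, le_trans hp hmm, hall⟩
  have hWcover : ∀ n, ⋃₀ Set.range (W n) = Set.univ := by
    intro n
    rw [Set.eq_univ_iff_forall]
    intro x
    rcases x.2 with hxS | hxF
    · obtain ⟨p, hp⟩ := hgapS _ hxS (n + 1)
      exact ⟨W n p, Set.mem_range_self p, ⟨p, le_refl p, hp⟩⟩
    · have hbdd : BddAbove {i | (x : CantorSp) i = true} := Set.Finite.bddAbove hxF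
      obtain ⟨q, hq⟩ := hbdd
      refine ⟨W n (q + 1), Set.mem_range_self _, ⟨q + 1, le_refl _, ?_⟩⟩
      intro i _
      cases hb : (x : CantorSp) (q + 1 + i) with
      | false => rfl
      | true =>
        have hle : q + 1 + i ≤ q := hq hb
        omega
  have hprem : ∀ n, ¬ ∃ 𝓕 ⊆ Set.range (W n), 𝓕.Finite ∧ ⋃₀ 𝓕 = Set.univ := by
    rintro n ⟨𝓕, hsub, hfin, huniv⟩
    obtain ⟨M, hM⟩ := bound_of_finite_subrange (W n) (hWmono n) 𝓕 hfin hsub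
    set y : CantorSp := fun i => decide (i < M + n + 2) with hy
    have hyF : y ∈ CFin := by
      apply Set.Finite.subset (Set.finite_Iio (M + n + 2))
      intro i hi
      simpa [hy] using hi
    have hyU : (⟨y, Or.inr hyF⟩ : ↥(S ∪ CFin)) ∈ ⋃₀ 𝓕 := by rw [huniv]; trivial
    obtain ⟨A, hA, hyA⟩ := hyU
    obtain ⟨p, hpM, hall⟩ := hM A hA hyA
    have h0 := hall 0 (by omega)
    have : ¬ (p + 0 < M + n + 2) := by
      have := h0
      simpa [hy] using this
    omega
  obtain ⟨𝓕, h𝓕, hev⟩ := hH (fun n => Set.range (W n))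
    (fun n => ⟨by rintro A ⟨m, rfl⟩; exact hWopen n m, hWcover n⟩) hprem
  have hMn : ∀ n, ∃ M, ⋃₀ 𝓕 n ⊆ W n M := by
    intro n
    obtain ⟨M, hM⟩ := bound_of_finite_subrange (W n) (hWmono n) (𝓕 n) (h𝓕 n).2 (h𝓕 n).1
    refine ⟨M, ?_⟩
    rintro x ⟨A, hA, hxA⟩
    exact hM A hA hxA
  choose M hMspec using hMn
  obtain ⟨x, hxS, hx⟩ := hesc (fun k => Nat.rec (motive := fun _ => ℕ) 0 (fun j _ => M j) k)
  have hxev := hev ⟨x, Or.inl hxS⟩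
  rw [Filter.eventually_atTop] at hxev
  obtain ⟨N, hN⟩ := hxev
  obtain ⟨n, hnN, hwin⟩ := hx N
  have hmem : (⟨x, Or.inl hxS⟩ : ↥(S ∪ CFin)) ∈ W n (M n) := hMspec n (hN n hnN)
  obtain ⟨p, hpM, hall⟩ := hmem
  obtain ⟨i, hi, hxi⟩ := hwin p hpM
  have hf : x (p + i) = false := hall i hi
  rw [hxi] at hf
  exact Bool.noConfusion hf

end HurewiczSide


section Construction

lemma exists_cofinal_family : ∃ T : Set (ℕ → ℕ), T.Nonempty ∧
    (∀ f : ℕ → ℕ, ∃ b ∈ T, ∀ k, f k ≤ b k) ∧ #T ≤ frd := by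
  classical
  obtain ⟨D, hD, hcard⟩ := exists_dominating_frd
  haveI : Nonempty ↥D := ((dominating_infinite hD).nonempty).to_subtype
  refine ⟨Set.range (fun p : D × ℕ => fun k => (Finset.range (k + 1)).sup (p.1 : ℕ → ℕ) + p.2),
    Set.range_nonempty _, ?_, ?_⟩
  · intro f
    set f' : ℕ → ℕ := fun k => (Finset.range (k + 1)).sup f with hf'
    obtain ⟨d, hdD, hdom⟩ := hD f'
    rw [LeStar, Filter.eventually_atTop] at hdom
    obtain ⟨N, hN⟩ := hdom
    refine ⟨_, ⟨(⟨d, hdD⟩, f' N), rfl⟩, ?_⟩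
    intro k
    show f k ≤ (Finset.range (k + 1)).sup d + f' N
    have hff' : f k ≤ f' k := Finset.le_sup (Finset.self_mem_range_succ k)
    by_cases hk : N ≤ k
    · have h1 : f' k ≤ d k := hN k hk
      have h2 : d k ≤ (Finset.range (k + 1)).sup d := Finset.le_sup (Finset.self_mem_range_succ k)
      omega
    · push_neg at hk
      have h1 : f k ≤ f' N := Finset.le_sup (Finset.mem_range.mpr (by omega))
      omega
  · have h1 : #(Set.range (fun p : D × ℕ => fun k => (Finset.range (k + 1)).sup (p.1 : ℕ → ℕ) + p.2))
        ≤ #(↥D × ℕ) := Cardinal.mk_range_le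
    have h2 : #(↥D × ℕ) = #↥D * #ℕ := by
      rw [Cardinal.mk_prod, Cardinal.lift_id, Cardinal.lift_id]
    have h3 : #↥D * #ℕ = frd := by
      rw [hcard, Cardinal.mk_nat, Cardinal.mul_eq_max aleph0_le_frd le_rfl]
      exact max_eq_left aleph0_le_frd
    rw [h2, h3] at h1
    exact h1

lemma mk_Idx : #(frd.ord).ToType = frd := by
  rw [Cardinal.mk_toType, Cardinal.card_ord]

lemma mk_Iio_Idx (i : (frd.ord).ToType) : #{j // j < i} < frd := by
  haveI hwo : IsWellOrder (frd.ord).ToType (· < ·) := isWellOrder_lt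
  have h1 := Ordinal.typein_lt_self i
  rw [Cardinal.lt_ord] at h1
  have h2 := Ordinal.card_typein
    (r := ((· < ·) : (frd.ord).ToType → (frd.ord).ToType → Prop)) i
  rw [h2] at h1
  exact h1

set_option maxHeartbeats 2000000 in
lemma exists_S : ∃ S : Set CantorSp, S ⊆ CInf ∧ #S = frd ∧
    (∀ b : ℕ → ℕ, #{x : CantorSp | x ∈ S ∧ ∀ k, enum x k ≤ b k} < frd) ∧
    (∀ x ∈ S, ∀ n : ℕ, ∃ p : ℕ, ∀ i < n, x (p + i) = false) ∧
    (∀ h : ℕ → ℕ, ∃ x ∈ S, ∀ N : ℕ, ∃ n ≥ N,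
      ∀ p ≤ h (n + 1), ∃ i < n + 1, x (p + i) = true) := by
  classical
  obtain ⟨T, hTne, hTcof, hTcard⟩ := exists_cofinal_family
  have hle : #↥T ≤ #(frd.ord).ToType := by rw [mk_Idx]; exact hTcard
  obtain ⟨emb⟩ := (Cardinal.le_def _ _).mp hle
  haveI : Nonempty ↥T := hTne.to_subtype
  set gT : (frd.ord).ToType → ↥T := Function.invFun emb with hgT
  have hgTsurj : Function.Surjective gT := Function.invFun_surjective emb.injective
  set bb : (frd.ord).ToType → ℕ → ℕ := fun i => (gT i : ℕ → ℕ) with hbb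
  have hbbcof : ∀ f : ℕ → ℕ, ∃ i, ∀ k, f k ≤ bb i k := by
    intro f
    obtain ⟨t, htT, hft⟩ := hTcof f
    obtain ⟨i, hi⟩ := hgTsurj ⟨t, htT⟩
    refine ⟨i, ?_⟩
    intro k
    have : bb i = t := by rw [hbb]; simp only; rw [hi]
    rw [this]
    exact hft k
  set Fm : (frd.ord).ToType → ℕ → ℕ := fun i => mon (bb i) with hFm
  have hFmsm : ∀ i, StrictMono (Fm i) := fun i => mon_strictMono (bb i)
  have hFmid : ∀ i n, n < Fm i n := fun i n => lt_mon _ n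
  have hFmge : ∀ i k, bb i k ≤ Fm i k := fun i k => le_mon _ k
  set Bs : ∀ _ : (frd.ord).ToType, (∀ j, j < _ → ℕ → ℕ) → Set (ℕ → ℕ) :=
    fun i prev => (Set.range fun j : {j // j < i} => Fm j.1)
      ∪ (Set.range fun j : {j // j < i} => mon (prev j.1 j.2)) with hBs
  have hBsmono : ∀ i prev, ∀ b ∈ Bs i prev, Monotone b := by
    rintro i prev b (⟨j, rfl⟩ | ⟨j, rfl⟩)
    · exact mon_mono _
    · exact mon_mono _
  have hBscard : ∀ i prev, #(Bs i prev) < frd := by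
    intro i prev
    have h1 : #(Set.range fun j : {j // j < i} => Fm j.1) < frd :=
      lt_of_le_of_lt Cardinal.mk_range_le (mk_Iio_Idx i)
    have h2 : #(Set.range fun j : {j // j < i} => mon (prev j.1 j.2)) < frd :=
      lt_of_le_of_lt Cardinal.mk_range_le (mk_Iio_Idx i)
    exact lt_of_le_of_lt (Cardinal.mk_union_le _ _)
      (Cardinal.add_lt_of_lt aleph0_le_frd h1 h2)
  set step : ∀ i : (frd.ord).ToType, (∀ j, j < i → ℕ → ℕ) → ℕ → ℕ :=
    fun i prev => Classical.choose
      (stageEx (Fm i) (hFmsm i) (hFmid i) (Bs i prev) (hBsmono i prev) (hBscard i prev))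
    with hstep
  set us : (frd.ord).ToType → ℕ → ℕ := wellFounded_lt.fix step with hus
  have husEq : ∀ i, us i = step i (fun j _ => us j) := fun i => WellFounded.fix_eq _ _ _
  have husSpec : ∀ i, StrictMono (us i) ∧
      (∀ b ∈ Bs i (fun j _ => us j), ∃ k, b k < us i k) ∧
      (∀ n, ∃ m', n < m' ∧ ∀ p ≤ Fm i m', ∃ j, p ≤ us i j ∧ us i j < p + m') ∧
      (∀ n, ∃ p, ∀ j, ¬ (p ≤ us i j ∧ us i j < p + n)) := by
    intro i
    rw [husEq i]
    exact Classical.choose_spec (stageEx (Fm i) (hFmsm i) (hFmid i)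
      (Bs i (fun j _ => us j)) (hBsmono i (fun j _ => us j)) (hBscard i (fun j _ => us j)))
  refine ⟨Set.range (fun i => xfun (us i)), ?_, ?_, ?_, ?_, ?_⟩
  · rintro x ⟨i, rfl⟩
    exact xfun_mem_CInf (husSpec i).1
  · -- cardinality
    have hinj : Function.Injective (fun i => xfun (us i)) := by
      intro i j hij
      by_contra hne
      rcases lt_or_gt_of_ne hne with h | h
      · obtain ⟨k, hk⟩ := (husSpec j).2.1 (mon (us i)) (Or.inr ⟨⟨i, h⟩, rfl⟩)
        have h1 : us i k ≤ mon (us i) k := le_mon _ k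
        have h2 : us i = us j := xfun_inj (husSpec i).1 (husSpec j).1 hij
        have h3 : us i k = us j k := congrFun h2 k
        omega
      · obtain ⟨k, hk⟩ := (husSpec i).2.1 (mon (us j)) (Or.inr ⟨⟨j, h⟩, rfl⟩)
        have h1 : us j k ≤ mon (us j) k := le_mon _ k
        have h2 : us i = us j := xfun_inj (husSpec i).1 (husSpec j).1 hij
        have h3 : us i k = us j k := congrFun h2 k
        omega
    rw [Cardinal.mk_range_eq _ hinj, mk_Idx]
  · -- concentration smallness
    intro b
    obtain ⟨i0, hi0⟩ := hbbcof b
    have hsub : {x : CantorSp | x ∈ Set.range (fun i => xfun (us i)) ∧ ∀ k, enum x k ≤ b k}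
        ⊆ (fun i => xfun (us i)) '' (Set.Iic i0) := by
      rintro x ⟨⟨i, rfl⟩, hbnd⟩
      refine ⟨i, ?_, rfl⟩
      rw [Set.mem_Iic]
      by_contra hgt
      push_neg at hgt
      obtain ⟨k, hk⟩ := (husSpec i).2.1 (Fm i0) (Or.inl ⟨⟨i0, hgt⟩, rfl⟩)
      have h1 : enum (xfun (us i)) k ≤ b k := hbnd k
      rw [enum_xfun (husSpec i).1] at h1
      have h2 : b k ≤ bb i0 k := hi0 k
      have h3 : bb i0 k ≤ Fm i0 k := hFmge i0 k
      omega
    have h4 : #↥(Set.Iic i0) < frd := by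
      have hIic : Set.Iic i0 = insert i0 (Set.Iio i0) := by
        ext j; simp [le_iff_lt_or_eq, or_comm]
      rw [hIic]
      refine lt_of_le_of_lt (Cardinal.mk_insert_le) ?_
      have h5 : #↥(Set.Iio i0) < frd := by
        have : #↥(Set.Iio i0) = #{j // j < i0} := rfl
        rw [this]; exact mk_Iio_Idx i0
      exact Cardinal.add_lt_of_lt aleph0_le_frd h5
        (lt_of_lt_of_le Cardinal.one_lt_aleph0 aleph0_le_frd)
    exact lt_of_le_of_lt
      (le_trans (Cardinal.mk_le_mk_of_subset hsub) Cardinal.mk_image_le) h4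
  · -- gaps
    rintro x ⟨i, rfl⟩ n
    obtain ⟨p, hp⟩ := (husSpec i).2.2.2 n
    refine ⟨p, ?_⟩
    intro i' hi'
    cases hb : xfun (us i) (p + i') with
    | false => exact hb
    | true =>
      obtain ⟨j, hj⟩ := (xfun_eq_true_iff (husSpec i).1 _).mp hb
      exact absurd ⟨hj ▸ Nat.le_add_right p i', by omega⟩ (hp j)
  · -- escape
    intro h
    obtain ⟨i0, hi0⟩ := hbbcof (mon h)
    refine ⟨xfun (us i0), ⟨i0, rfl⟩, ?_⟩
    intro N
    obtain ⟨m', hm'N, hwin⟩ := (husSpec i0).2.2.1 N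
    refine ⟨m' - 1, by omega, ?_⟩
    intro p hp
    have hm'1 : m' - 1 + 1 = m' := by omega
    rw [hm'1] at hp ⊢
    have hple : p ≤ Fm i0 m' := by
      have h1 : h m' ≤ mon h m' := le_mon _ _
      have h2 : mon h m' ≤ bb i0 m' := hi0 m'
      have h3 : bb i0 m' ≤ Fm i0 m' := hFmge i0 m'
      omega
    obtain ⟨j, hj1, hj2⟩ := hwin p hple
    refine ⟨us i0 j - p, by omega, ?_⟩
    have hpj : p + (us i0 j - p) = us i0 j := by omega
    rw [hpj]
    exact (xfun_eq_true_iff (husSpec i0).1 _).mpr ⟨j, rfl⟩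

end Construction

/-- There is a set `S ⊆ [ℕ]^∞` of cardinality `𝔡` such that the subspace
`S ∪ Fin` of the Cantor space is Menger but not Hurewicz. -/
theorem stmt1 :
    ∃ S : Set CantorSp, S ⊆ CInf ∧ #S = frd ∧
      Menger ↥(S ∪ CFin) ∧ ¬ Hurewicz ↥(S ∪ CFin) := by
  obtain ⟨S, hSInf, hScard, hsmall, hgap, hesc⟩ := exists_S
  exact ⟨S, hSInf, hScard, menger_of S hsmall, not_hurewicz_of S hgap hesc⟩
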